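/- Let E be a real inner product space and f : E → ℝ convex and differentiable with β-Lipschitz gradient. Then for every learning rate γ with 0 ≤ γ ≤ 2/β, the gradient descent map G(x) = x − γ·∇f(x) is 1-Lipschitz (nonexpansive): ‖(x − γ∇f(x)) − (y − γ∇f(y))‖ ≤ ‖x − y‖ for all x, y ∈ E. -/

import Mathlib

open Set InnerProductSpace
open scoped RealInnerProductSpace

section Aux

variable {E : Type*} [NormedAddCommGroup E] [InnerProductSpace ℝ E] [CompleteSpace E]

/-- Derivative of `f` along a line. -/
lemma gd_line_hasDerivAt (f : E → ℝ) (hdiff : Differentiable ℝ f) (x y : E) (t : ℝ) :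
    HasDerivAt (fun s : ℝ => f (x + s • (y - x)))
      ⟪gradient f (x + t • (y - x)), y - x⟫_ℝ t := by
  have hline : HasDerivAt (fun s : ℝ => x + s • (y - x)) (y - x) t := by
    simpa using ((hasDerivAt_id t).smul_const (y - x)).const_add x
  have h := ((hdiff (x + t • (y - x))).hasGradientAt.hasFDerivAt).comp_hasDerivAt t hline
  simpa [InnerProductSpace.toDual_apply_apply, Function.comp_def] using h

/-- Gradient inequality for convex functions. -/
lemma gd_grad_ineq (f : E → ℝ) (hconv : ConvexOn ℝ Set.univ f)
    (hdiff : Differentiable ℝ f) (x y : E) :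
    f x + ⟪gradient f x, y - x⟫_ℝ ≤ f y := by
  set g : ℝ → ℝ := fun s => f (x + s • (y - x)) with hgdef
  have hgconv : ConvexOn ℝ Set.univ g := by
    refine ⟨convex_univ, fun p _ q _ a b ha hb hab => ?_⟩
    have hb' : b = 1 - a := by linarith
    subst hb'
    simp only [hgdef, smul_eq_mul]
    have hpt : x + (a * p + (1 - a) * q) • (y - x)
        = a • (x + p • (y - x)) + (1 - a) • (x + q • (y - x)) := by
      module
    rw [hpt]
    simpa using hconv.2 (mem_univ (x + p • (y - x)))
      (mem_univ (x + q • (y - x))) ha hb hab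
  have hder : HasDerivAt g ⟪gradient f x, y - x⟫_ℝ 0 := by
    simpa using gd_line_hasDerivAt f hdiff x y 0
  have hs := hgconv.le_slope_of_hasDerivAt (mem_univ (0:ℝ)) (mem_univ (1:ℝ))
    one_pos hder
  have hg0 : g 0 = f x := by simp [hgdef]
  have hg1 : g 1 = f y := by simp [hgdef]
  rw [slope_def_field] at hs
  simp [hg0, hg1] at hs
  simp only [inner_gradient_left, map_sub]
  linarith

/-- Descent lemma for β-smooth functions. -/
lemma gd_descent (f : E → ℝ) (β : ℝ)
    (hdiff : Differentiable ℝ f)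
    (hsmooth : ∀ x y, ‖gradient f x - gradient f y‖ ≤ β * ‖x - y‖) (x y : E) :
    f y ≤ f x + ⟪gradient f x, y - x⟫_ℝ + β / 2 * ‖y - x‖ ^ 2 := by
  set h : ℝ → ℝ := fun t => f (x + t • (y - x)) - t * ⟪gradient f x, y - x⟫_ℝ
    - t ^ 2 * (β / 2) * ‖y - x‖ ^ 2 with hhdef
  have hder : ∀ t : ℝ, HasDerivAt h
      (⟪gradient f (x + t • (y - x)), y - x⟫_ℝ - ⟪gradient f x, y - x⟫_ℝ
        - 2 * t * (β / 2) * ‖y - x‖ ^ 2) t := by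
    intro t
    have h1 := gd_line_hasDerivAt f hdiff x y t
    have h2 : HasDerivAt (fun t : ℝ => t * ⟪gradient f x, y - x⟫_ℝ)
        ⟪gradient f x, y - x⟫_ℝ t := by
      simpa using (hasDerivAt_id t).mul_const ⟪gradient f x, y - x⟫_ℝ
    have h3 : HasDerivAt (fun t : ℝ => t ^ 2 * (β / 2) * ‖y - x‖ ^ 2)
        (2 * t * (β / 2) * ‖y - x‖ ^ 2) t := by
      have := ((hasDerivAt_pow 2 t).mul_const (β / 2)).mul_const (‖y - x‖ ^ 2)
      simpa [mul_comm, mul_assoc, mul_left_comm] using this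
    exact (h1.sub h2).sub h3
  have hanti : AntitoneOn h (Icc (0:ℝ) 1) := by
    apply antitoneOn_of_deriv_nonpos (convex_Icc 0 1)
    · exact fun t _ => ((hder t).continuousAt).continuousWithinAt
    · exact fun t _ => ((hder t).differentiableAt).differentiableWithinAt
    · intro t ht
      rw [interior_Icc] at ht
      rw [(hder t).deriv]
      have hb : ⟪gradient f (x + t • (y - x)) - gradient f x, y - x⟫_ℝ
          ≤ β * t * ‖y - x‖ ^ 2 := by
        calc ⟪gradient f (x + t • (y - x)) - gradient f x, y - x⟫_ℝ
            ≤ ‖gradient f (x + t • (y - x)) - gradient f x‖ * ‖y - x‖ :=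
              real_inner_le_norm _ _
          _ ≤ β * ‖(x + t • (y - x)) - x‖ * ‖y - x‖ := by
              have := hsmooth (x + t • (y - x)) x
              nlinarith [norm_nonneg (y - x)]
          _ = β * t * ‖y - x‖ ^ 2 := by
              rw [add_sub_cancel_left, norm_smul, Real.norm_eq_abs,
                abs_of_pos ht.1]
              ring
      rw [inner_sub_left] at hb
      nlinarith
  have h10 := hanti (left_mem_Icc.2 zero_le_one) (right_mem_Icc.2 zero_le_one) zero_le_one
  simp [hhdef] at h10
  simp only [inner_gradient_left, map_sub]
  linarith

/-- Co-coercivity of the gradient. -/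
lemma gd_cocoercive (f : E → ℝ) (β : ℝ) (hβ : 0 < β)
    (hconv : ConvexOn ℝ Set.univ f) (hdiff : Differentiable ℝ f)
    (hsmooth : ∀ x y, ‖gradient f x - gradient f y‖ ≤ β * ‖x - y‖) (x y : E) :
    (1 / β) * ‖gradient f x - gradient f y‖ ^ 2
      ≤ ⟪gradient f x - gradient f y, x - y⟫_ℝ := by
  set u := gradient f x with hu
  set v := gradient f y with hv
  -- key one-sided estimate
  have key : ∀ a b : E, f a + ⟪gradient f a, b - a⟫_ℝ
      + (1 / (2 * β)) * ‖gradient f a - gradient f b‖ ^ 2 ≤ f b := by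
    intro a b
    set p := gradient f a with hp
    set q := gradient f b with hq
    set z := b + (1 / β) • (p - q) with hz
    have h1 := gd_grad_ineq f hconv hdiff a z
    have h2 := gd_descent f β hdiff hsmooth b z
    rw [← hp] at h1
    rw [← hq] at h2
    have hz_b : z - b = (1 / β) • (p - q) := by rw [hz]; abel
    have hz_a : z - a = (b - a) + (1 / β) • (p - q) := by rw [hz]; abel
    rw [hz_a, inner_add_right, real_inner_smul_right] at h1
    rw [hz_b, real_inner_smul_right, norm_smul, Real.norm_eq_abs] at h2
    have habs : |1 / β| = 1 / β := abs_of_pos (by positivity)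
    rw [habs] at h2
    have hpq : ⟪p, p - q⟫_ℝ - ⟪q, p - q⟫_ℝ = ‖p - q‖ ^ 2 := by
      rw [← inner_sub_left, real_inner_self_eq_norm_sq]
    have hβ' : β ≠ 0 := ne_of_gt hβ
    have hexp : β / 2 * ((1 / β) * ‖p - q‖) ^ 2 = 1 / (2 * β) * ‖p - q‖ ^ 2 := by
      field_simp
    rw [hexp] at h2
    have hXY : 1 / β * ⟪p, p - q⟫_ℝ - 1 / β * ⟪q, p - q⟫_ℝ
        = 1 / β * ‖p - q‖ ^ 2 := by rw [← mul_sub, hpq]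
    have hcd : 1 / β * ‖p - q‖ ^ 2 = 2 * (1 / (2 * β) * ‖p - q‖ ^ 2) := by
      field_simp
    linarith
  have k1 := key x y
  have k2 := key y x
  have hsymm : ‖v - u‖ = ‖u - v‖ := norm_sub_rev _ _
  rw [← hu, ← hv] at k1 k2
  rw [hsymm] at k2
  have hinner : ⟪v, x - y⟫_ℝ = - ⟪v, y - x⟫_ℝ := by
    rw [← inner_neg_right]; congr 1; abel
  have hsum : ⟪u - v, x - y⟫_ℝ = ⟪u, x - y⟫_ℝ - ⟪v, x - y⟫_ℝ := inner_sub_left _ _ _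
  have hu_xy : ⟪u, y - x⟫_ℝ = - ⟪u, x - y⟫_ℝ := by
    rw [← inner_neg_right]; congr 1; abel
  rw [hsum]
  rw [hu_xy] at k1
  rw [hinner]
  have : 1 / (2 * β) * ‖u - v‖ ^ 2 + 1 / (2 * β) * ‖u - v‖ ^ 2 = (1 / β) * ‖u - v‖ ^ 2 := by
    field_simp; ring
  linarith

end Aux

/-- For a convex differentiable `f` with β-Lipschitz gradient on a real inner
product space, the gradient descent map `x ↦ x - γ • ∇f(x)` with `0 ≤ γ ≤ 2/β` is
nonexpansive. -/
theorem gradient_descent_map_nonexpansive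
    {E : Type*} [NormedAddCommGroup E] [InnerProductSpace ℝ E] [CompleteSpace E]
    (f : E → ℝ) (β γ : ℝ) (hβ : 0 < β)
    (hconv : ConvexOn ℝ Set.univ f)
    (hdiff : Differentiable ℝ f)
    (hsmooth : ∀ x y, ‖gradient f x - gradient f y‖ ≤ β * ‖x - y‖)
    (hγ0 : 0 ≤ γ) (hγ : γ ≤ 2 / β) :
    ∀ x y : E, ‖(x - γ • gradient f x) - (y - γ • gradient f y)‖ ≤ ‖x - y‖ := by
  intro x y
  set u := gradient f x with hu
  set v := gradient f y with hv
  have hco := gd_cocoercive f β hβ hconv hdiff hsmooth x y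
  rw [← hu, ← hv] at hco
  have hre : (x - γ • u) - (y - γ • v) = (x - y) - γ • (u - v) := by
    rw [smul_sub]; abel
  rw [hre]
  have hsq : ‖(x - y) - γ • (u - v)‖ ^ 2 ≤ ‖x - y‖ ^ 2 := by
    rw [norm_sub_sq_real, real_inner_smul_right, norm_smul, Real.norm_eq_abs,
      abs_of_nonneg hγ0]
    have h1 : γ * (1 / β) * ‖u - v‖ ^ 2 ≤ γ * ⟪x - y, u - v⟫_ℝ := by
      have := mul_le_mul_of_nonneg_left hco hγ0
      rw [real_inner_comm] at this
      calc γ * (1 / β) * ‖u - v‖ ^ 2 = γ * ((1 / β) * ‖u - v‖ ^ 2) := by ring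
        _ ≤ γ * ⟪x - y, u - v⟫_ℝ := this
    have h2 : 0 ≤ γ * (2 / β - γ) := mul_nonneg hγ0 (by linarith)
    have h3 : γ * (2 / β - γ) * ‖u - v‖ ^ 2 ≥ 0 :=
      mul_nonneg h2 (by positivity)
    have hgb : γ * (2 / β) = 2 * (γ * (1 / β)) := by ring
    nlinarith [sq_nonneg ‖u - v‖]
  calc ‖(x - y) - γ • (u - v)‖
      = Real.sqrt (‖(x - y) - γ • (u - v)‖ ^ 2) := by
        rw [Real.sqrt_sq (norm_nonneg _)]
    _ ≤ Real.sqrt (‖x - y‖ ^ 2) := Real.sqrt_le_sqrt hsq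
    _ = ‖x - y‖ := Real.sqrt_sq (norm_nonneg _)
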